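/- Let C : ℝ^n → ℝ^q and A : ℝ^n → ℝ^n be linear maps, let B = ker C, and let P_0, …, P_r : ℝ^m → ℝ^n be linear maps satisfying: C ∘ (A ∘ P_0) = 0; C ∘ (P_{i−1} − A ∘ P_i) = 0 for every 1 ≤ i ≤ r; and C ∘ P_r = 0. Then for every 0 ≤ i ≤ r, the range of P_i is contained in the submodule B + A(B) + A²(B) + ⋯ + A^{r−i}(B) of ℝ^n, where A^j(B) denotes the image of B under the j-th iterate of A. -/

import Mathlib

lemma submodule_map_finset_sum {R M N : Type*} [CommRing R] [AddCommGroup M]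
    [AddCommGroup N] [Module R M] [Module R N] (f : M →ₗ[R] N) {ι : Type*}
    (s : Finset ι) (p : ι → Submodule R M) :
    Submodule.map f (∑ i ∈ s, p i) = ∑ i ∈ s, Submodule.map f (p i) := by
  classical
  induction s using Finset.induction with
  | empty => simp
  | @insert a s h ih =>
      rw [Finset.sum_insert h, Finset.sum_insert h, Submodule.add_eq_sup,
        Submodule.add_eq_sup, Submodule.map_sup, ih]

/-- If `B = ker C` and the linear maps `P_0,…,P_r` satisfy `C ∘ A ∘ P_0 = 0`,
`C ∘ (P_{i-1} - A ∘ P_i) = 0` for `1 ≤ i ≤ r`, and `C ∘ P_r = 0`, then for each `i`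
the range of `P_i` is contained in `B + A(B) + ⋯ + A^{r-i}(B)`. -/
theorem stmt_12 (n m q r : ℕ) (hn : 0 < n) (hm : 0 < m) (hq : 0 < q)
    (C : (Fin n → ℝ) →ₗ[ℝ] (Fin q → ℝ)) (A : (Fin n → ℝ) →ₗ[ℝ] (Fin n → ℝ))
    (P : Fin (r+1) → ((Fin m → ℝ) →ₗ[ℝ] (Fin n → ℝ)))
    (h0 : C ∘ₗ (A ∘ₗ P 0) = 0)
    (hstep : ∀ (i : ℕ) (h1 : 1 ≤ i) (h2 : i ≤ r),
      C ∘ₗ (P ⟨i - 1, by omega⟩ - A ∘ₗ P ⟨i, by omega⟩) = 0)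
    (hlast : C ∘ₗ P (Fin.last r) = 0) :
    ∀ i : Fin (r+1), LinearMap.range (P i) ≤
      ∑ j ∈ Finset.range (r - i.val + 1), Submodule.map (A ^ j) (LinearMap.ker C) := by
  have aux : ∀ d : ℕ, d ≤ r → LinearMap.range (P ⟨r - d, by omega⟩) ≤
      ∑ j ∈ Finset.range (d + 1), Submodule.map (A ^ j) (LinearMap.ker C) := by
    intro d
    induction d with
    | zero =>
        intro _
        rw [Finset.sum_range_one, pow_zero, Module.End.one_eq_id, Submodule.map_id]
        have : (⟨r - 0, by omega⟩ : Fin (r+1)) = Fin.last r := by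
          ext; simp [Fin.last]
        rw [this, LinearMap.range_le_ker_iff]
        exact hlast
    | succ d ih =>
        intro hd
        rintro x ⟨y, rfl⟩
        have hd' : d ≤ r := by omega
        have hi : r - (d + 1) + 1 = r - d := by omega
        have hk : C ∘ₗ (P ⟨r - (d+1), by omega⟩ - A ∘ₗ P ⟨r - d, by omega⟩) = 0 := by
          have := hstep (r - d) (by omega) (by omega)
          have e1 : (⟨r - (d+1), by omega⟩ : Fin (r+1)) = ⟨r - d - 1, by omega⟩ :=
            Fin.ext (by show r - (d+1) = r - d - 1; omega)
          rw [e1]; exact this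
        have hsplit : P ⟨r - (d+1), by omega⟩ y =
            (P ⟨r - (d+1), by omega⟩ - A ∘ₗ P ⟨r - d, by omega⟩) y
              + A (P ⟨r - d, by omega⟩ y) := by
          simp
        rw [hsplit, Finset.sum_range_succ',
          add_comm ((P ⟨r - (d+1), by omega⟩ - A ∘ₗ P ⟨r - d, by omega⟩) y)]
        refine Submodule.add_mem_sup ?_ ?_
        · -- second piece into ∑ map (A^(j+1))
          have hmem : P ⟨r - d, by omega⟩ y ∈
              ∑ j ∈ Finset.range (d + 1), Submodule.map (A ^ j) (LinearMap.ker C) :=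
            ih hd' ⟨y, rfl⟩
          have hA : A (P ⟨r - d, by omega⟩ y) ∈
              Submodule.map A (∑ j ∈ Finset.range (d + 1),
                Submodule.map (A ^ j) (LinearMap.ker C)) := ⟨_, hmem, rfl⟩
          rw [submodule_map_finset_sum] at hA
          have heq : ∑ j ∈ Finset.range (d + 1),
              Submodule.map A (Submodule.map (A ^ j) (LinearMap.ker C)) =
              ∑ j ∈ Finset.range (d + 1),
                Submodule.map (A ^ (j + 1)) (LinearMap.ker C) :=
            Finset.sum_congr rfl fun j _ => by
              rw [pow_succ', Module.End.mul_eq_comp, Submodule.map_comp]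
          rw [heq] at hA
          exact hA
        · have : C ((P ⟨r - (d+1), by omega⟩ - A ∘ₗ P ⟨r - d, by omega⟩) y) = 0 := by
            rw [← LinearMap.comp_apply, hk]; rfl
          exact ⟨_, this, by rw [pow_zero, Module.End.one_eq_id]; rfl⟩
  intro i
  have hle : i.val ≤ r := by omega
  have : (⟨r - (r - i.val), by omega⟩ : Fin (r+1)) = i := by
    ext; simp; omega
  have := aux (r - i.val) (by omega)
  rwa [‹(⟨r - (r - i.val), by omega⟩ : Fin (r+1)) = i›] at this
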